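/- Let k ≥ 1 and let m ≥ 1 be odd, and set n = m·2^k − 1. Then for every N, the polynomial I_{n,2^k} is equal to e_1^{2^k} in MvPolynomial (Fin N) (ZMod 2). -/

import Mathlib

open MvPolynomial

section Aux
open Finset

variable {σ : Type*} [Fintype σ] [DecidableEq σ] {R : Type*} [CommSemiring R]

lemma hsymm_newton (d : ℕ) :
    ∑ j ∈ Finset.Icc 1 d, hsymm σ R (d - j) * psum σ R j = d • hsymm σ R d := by
  classical
  have step1 : ∑ j ∈ Finset.Icc 1 d, hsymm σ R (d - j) * psum σ R j
      = ∑ j ∈ Finset.Icc 1 d, ∑ s : Sym σ (d - j), ∑ i : σ,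
          ((Multiset.map X s.1).prod : MvPolynomial σ R) * X i ^ j := by
    refine Finset.sum_congr rfl fun j hj => ?_
    rw [hsymm, psum, Finset.sum_mul_sum]
  have step2 : ∑ x ∈ (((Finset.Icc 1 d).sigma fun j =>
          (Finset.univ : Finset (Sym σ (d - j)))).sigma fun _ => (Finset.univ : Finset σ)),
        ((Multiset.map X x.1.2.1).prod : MvPolynomial σ R) * X x.2 ^ x.1.1
      = ∑ j ∈ Finset.Icc 1 d, ∑ s : Sym σ (d - j), ∑ i : σ,
          ((Multiset.map X s.1).prod : MvPolynomial σ R) * X i ^ j := by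
    rw [Finset.sum_sigma, Finset.sum_sigma]
  have step3 : ∑ x ∈ (((Finset.Icc 1 d).sigma fun j =>
          (Finset.univ : Finset (Sym σ (d - j)))).sigma fun _ => (Finset.univ : Finset σ)),
        ((Multiset.map X x.1.2.1).prod : MvPolynomial σ R) * X x.2 ^ x.1.1
      = ∑ y ∈ ((Finset.univ : Finset (Sym σ d)).sigma fun μ =>
          (Finset.univ : Finset σ).sigma fun i => Finset.Icc 1 (Multiset.count i μ.1)),
        ((Multiset.map X y.1.1).prod : MvPolynomial σ R) := by
    refine Finset.sum_bij' (i := fun x hx => ⟨⟨x.1.2.1 + Multiset.replicate x.1.1 x.2, by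
        have hx' := hx
        simp only [Finset.mem_sigma, Finset.mem_Icc] at hx'
        simp [x.1.2.2, Nat.sub_add_cancel hx'.1.1.2]⟩, x.2, x.1.1⟩)
      (j := fun y hy => ⟨⟨y.2.2, ⟨y.1.1 - Multiset.replicate y.2.2 y.2.1, by
        have hy' := hy
        simp only [Finset.mem_sigma, Finset.mem_univ, Finset.mem_Icc, true_and] at hy'
        rw [Multiset.card_sub (Multiset.le_count_iff_replicate_le.mp hy'.2)]
        simp [y.1.2]⟩⟩, y.2.1⟩) ?_ ?_ ?_ ?_ ?_
    · rintro ⟨⟨j, s⟩, i⟩ hx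
      simp only [Finset.mem_sigma, Finset.mem_Icc, Finset.mem_univ, true_and] at hx ⊢
      simp [Multiset.count_replicate]
      exact ⟨Finset.mem_univ _, hx.1.1.1⟩
    · rintro ⟨μ, i, j⟩ hy
      simp only [Finset.mem_sigma, Finset.mem_Icc, Finset.mem_univ, true_and] at hy ⊢
      have := Multiset.count_le_card i μ.1
      rw [μ.2] at this
      exact ⟨⟨⟨hy.1, hy.2.trans this⟩, Finset.mem_univ _⟩, trivial⟩
    · rintro ⟨⟨j, s⟩, i⟩ hx
      simp only [Sigma.ext_iff, heq_eq_eq, Subtype.ext_iff, and_true, true_and]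
      exact heq_of_eq (Subtype.ext (by simp))
    · rintro ⟨μ, i, j⟩ hy
      simp only [Finset.mem_sigma, Finset.mem_univ, Finset.mem_Icc, true_and] at hy
      simp only [Sigma.ext_iff, heq_eq_eq, Subtype.ext_iff, and_true, true_and]
      exact Subtype.ext (tsub_add_cancel_of_le (Multiset.le_count_iff_replicate_le.mp hy.2))
    · rintro ⟨⟨j, s⟩, i⟩ hx
      simp [Multiset.prod_replicate]
  have step4 : ∑ y ∈ ((Finset.univ : Finset (Sym σ d)).sigma fun μ =>
          (Finset.univ : Finset σ).sigma fun i => Finset.Icc 1 (Multiset.count i μ.1)),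
        ((Multiset.map X y.1.1).prod : MvPolynomial σ R) = d • hsymm σ R d := by
    rw [Finset.sum_sigma, hsymm, Finset.smul_sum]
    refine Finset.sum_congr rfl fun μ _ => ?_
    rw [Finset.sum_sigma]
    simp only [Finset.sum_const, Nat.card_Icc, Nat.add_sub_cancel]
    rw [← Finset.sum_smul, Multiset.sum_count_eq_card (fun a _ => Finset.mem_univ a), μ.2]
  rw [step1, ← step2, step3, step4]

lemma choose_mod_two_lt (K m j : ℕ) (hm : 1 ≤ m) (hj : j ≤ 2 ^ K - 1) :
    (m * 2 ^ K - 1).choose j % 2 = 1 := by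
  induction K generalizing m j with
  | zero =>
    simp only [pow_zero, Nat.le_refl, mul_one] at *
    have : j = 0 := by omega
    simp [this]
  | succ K ih =>
    haveI : Fact (Nat.Prime 2) := ⟨Nat.prime_two⟩
    have h := (Choose.choose_modEq_choose_mod_mul_choose_div_nat
      (n := m * 2 ^ (K + 1) - 1) (k := j) (p := 2))
    have hK1 : 1 ≤ 2 ^ K := Nat.one_le_two_pow
    have ht1 : 1 ≤ m * 2 ^ K := Nat.mul_pos hm (by positivity)
    have hn2 : m * 2 ^ (K + 1) = 2 * (m * 2 ^ K) := by rw [pow_succ]; ring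
    rw [hn2] at h ⊢
    have hmod : (2 * (m * 2 ^ K) - 1) % 2 = 1 := by omega
    have hdiv : (2 * (m * 2 ^ K) - 1) / 2 = m * 2 ^ K - 1 := by omega
    rw [hmod, hdiv] at h
    have hj2 : j % 2 ≤ 1 := by omega
    have hc1 : Nat.choose 1 (j % 2) = 1 := by interval_cases h : j % 2 <;> simp
    rw [hc1, one_mul] at h
    have hjd : j / 2 ≤ 2 ^ K - 1 := by omega
    have := ih m (j / 2) hm hjd
    unfold Nat.ModEq at h
    omega

lemma choose_mod_two_top (K m : ℕ) (hm : Odd m) :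
    (m * 2 ^ K - 1).choose (2 ^ K) % 2 = 0 := by
  induction K with
  | zero =>
    simp only [pow_zero, mul_one, Nat.choose_one_right]
    obtain ⟨r, rfl⟩ := hm
    omega
  | succ K ih =>
    haveI : Fact (Nat.Prime 2) := ⟨Nat.prime_two⟩
    have h := (Choose.choose_modEq_choose_mod_mul_choose_div_nat
      (n := m * 2 ^ (K + 1) - 1) (k := 2 ^ (K + 1)) (p := 2))
    have hm1 : 1 ≤ m := hm.pos
    have hK1 : 1 ≤ 2 ^ K := Nat.one_le_two_pow
    have ht1 : 1 ≤ m * 2 ^ K := Nat.mul_pos hm1 (by positivity)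
    have hn2 : m * 2 ^ (K + 1) = 2 * (m * 2 ^ K) := by rw [pow_succ]; ring
    have hj2 : 2 ^ (K + 1) = 2 * 2 ^ K := by rw [pow_succ]; ring
    rw [hn2, hj2] at h ⊢
    have hmod : (2 * (m * 2 ^ K) - 1) % 2 = 1 := by omega
    have hdiv : (2 * (m * 2 ^ K) - 1) / 2 = m * 2 ^ K - 1 := by omega
    have hjm : (2 * 2 ^ K) % 2 = 0 := by omega
    have hjdv : (2 * 2 ^ K) / 2 = 2 ^ K := by omega
    rw [hmod, hdiv, hjm, hjdv] at h
    simp only [Nat.choose_zero_right, one_mul] at h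
    unfold Nat.ModEq at h
    omega

end Aux

/-- The polynomial `I_{n,d}` in `N` variables over `ZMod 2`:
`ε(n-d+1)·h_d + ∑_{j=1}^{d} ε(C(n,j))·h_{d-j}·p_j`. -/
noncomputable def Ipoly (N n d : ℕ) : MvPolynomial (Fin N) (ZMod 2) :=
  C (((n : ℤ) - (d : ℤ) + 1 : ℤ) : ZMod 2) * hsymm (Fin N) (ZMod 2) d +
    ∑ j ∈ Finset.Icc 1 d,
      C (((n.choose j : ℤ)) : ZMod 2) * hsymm (Fin N) (ZMod 2) (d - j) *
        psum (Fin N) (ZMod 2) j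

theorem stmt_1 (k m : ℕ) (hk : 1 ≤ k) (hm : 1 ≤ m) (hmodd : Odd m)
    (n : ℕ) (hn : n = m * 2 ^ k - 1) (N : ℕ) :
    Ipoly N n (2 ^ k) = (esymm (Fin N) (ZMod 2) 1) ^ (2 ^ k) := by
  obtain ⟨k', rfl⟩ : ∃ k', k = k' + 1 := ⟨k - 1, by omega⟩
  have hK1 : 1 ≤ 2 ^ (k' + 1) := Nat.one_le_two_pow
  have hmk : 1 ≤ m * 2 ^ (k' + 1) := Nat.mul_pos hm (by positivity)
  have hnz : (n : ℤ) = (m : ℤ) * 2 ^ (k' + 1) - 1 := by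
    rw [hn, Nat.cast_sub hmk]; push_cast; ring
  -- first coefficient is zero
  have hc0 : ((((n : ℤ) - ((2 ^ (k' + 1) : ℕ) : ℤ) + 1 : ℤ)) : ZMod 2) = 0 := by
    rw [ZMod.intCast_zmod_eq_zero_iff_dvd]
    exact ⟨((m : ℤ) - 1) * 2 ^ k', by rw [hnz]; push_cast; ring⟩
  -- choose coefficients
  have hodd : ∀ j ∈ Finset.Icc 1 (2 ^ (k' + 1) - 1),
      (((n.choose j : ℤ)) : ZMod 2) = 1 := by
    intro j hj
    rw [Finset.mem_Icc] at hj
    have := choose_mod_two_lt (k' + 1) m j hm hj.2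
    rw [← hn] at this
    rw [Int.cast_natCast, ← ZMod.natCast_mod, this, Nat.cast_one]
  have heven : (((n.choose (2 ^ (k' + 1)) : ℤ)) : ZMod 2) = 0 := by
    have := choose_mod_two_top (k' + 1) m hmodd
    rw [← hn] at this
    rw [Int.cast_natCast, ← ZMod.natCast_mod, this, Nat.cast_zero]
  rw [Ipoly, hc0, map_zero, zero_mul, zero_add]
  -- split off the top term of the sum
  have hEtop : 2 ^ (k' + 1) = (2 ^ (k' + 1) - 1) + 1 := by omega
  rw [hEtop, Finset.sum_Icc_succ_top (by omega : 1 ≤ (2 ^ (k' + 1) - 1) + 1)]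
  rw [← hEtop, heven, map_zero, zero_mul, zero_mul, add_zero]
  have hmain : ∑ j ∈ Finset.Icc 1 (2 ^ (k' + 1) - 1),
      C (((n.choose j : ℤ)) : ZMod 2) * hsymm (Fin N) (ZMod 2) (2 ^ (k' + 1) - j) *
        psum (Fin N) (ZMod 2) j
      = ∑ j ∈ Finset.Icc 1 (2 ^ (k' + 1) - 1),
          hsymm (Fin N) (ZMod 2) (2 ^ (k' + 1) - j) * psum (Fin N) (ZMod 2) j := by
    refine Finset.sum_congr rfl fun j hj => ?_
    rw [hodd j hj, map_one, one_mul]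
  rw [hmain]
  -- Newton identity
  have hnewton := hsymm_newton (σ := Fin N) (R := ZMod 2) (2 ^ (k' + 1))
  rw [hEtop, Finset.sum_Icc_succ_top (by omega : 1 ≤ (2 ^ (k' + 1) - 1) + 1),
      ← hEtop] at hnewton
  rw [Nat.sub_self, hsymm_zero, one_mul] at hnewton
  have hzero : (2 ^ (k' + 1)) • hsymm (Fin N) (ZMod 2) (2 ^ (k' + 1)) = 0 := by
    rw [pow_succ, mul_smul, CharTwo.two_nsmul, smul_zero]
  rw [hzero, CharTwo.add_eq_iff_eq_add, zero_add] at hnewton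
  rw [hnewton, esymm_one, psum, sum_pow_char_pow]
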